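/- Suppose the Hessian map x ↦ ∇²f(x) is L₂-Lipschitz in operator norm with L₂ > 0. Let x⁰ ∈ E, μ > 0, H = ∇²f(x⁰) + μ·Id, let x̃ be a minimizer of q over E, and let x̄ ∈ X satisfy ‖x⁰ − x̄‖ = dist(x⁰, X). Then ‖x̃ − x⁰‖ ≤ ((L₂/(2μ))·dist(x⁰, X) + 2)·dist(x⁰, X). -/

import Mathlib

open scoped RealInnerProductSpace
open Filter Topology

abbrev E (n : ℕ) := EuclideanSpace ℝ (Fin n)

set_option maxHeartbeats 1000000 in
/-- If the Hessian map is L₂-Lipschitz in operator norm, `μ > 0`,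
`H = ∇²f(x⁰) + μ·Id`, `x̃` minimizes `q`, and `x̄ ∈ X` is the nearest point of `X`
to `x⁰`, then `‖x̃ − x⁰‖ ≤ ((L₂/(2μ))·dist(x⁰, X) + 2)·dist(x⁰, X)`. -/
theorem stmt8 {n : ℕ} (f g : E n → ℝ) (f' : E n → E n)
    (hess : E n → E n →L[ℝ] E n)
    (hfconv : ConvexOn ℝ Set.univ f) (hfC2 : ContDiff ℝ 2 f)
    (hgrad : ∀ x, HasGradientAt f (f' x) x)
    (hhess : ∀ x, HasFDerivAt f' (hess x) x)
    (hsa : ∀ x u w, ⟪hess x u, w⟫ = ⟪u, hess x w⟫)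
    (hgconv : ConvexOn ℝ Set.univ g) (hgcont : Continuous g)
    (F : E n → ℝ) (hF : ∀ y, F y = f y + g y)
    (X : Set (E n)) (hX : X = {y | ∀ z, F y ≤ F z}) (hXne : X.Nonempty)
    (L₂ : ℝ) (hL₂ : 0 < L₂) (hlip2 : ∀ y z, ‖hess y - hess z‖ ≤ L₂ * ‖y - z‖)
    (x₀ : E n) (μ : ℝ) (hμ : 0 < μ)
    (H : E n →L[ℝ] E n) (hH : H = hess x₀ + μ • ContinuousLinearMap.id ℝ (E n))
    (q : E n → ℝ)
    (hq : ∀ y, q y = f x₀ + ⟪f' x₀, y - x₀⟫ + (1/2) * ⟪H (y - x₀), y - x₀⟫ + g y)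
    (xt : E n) (hxt : ∀ y, q xt ≤ q y)
    (xbar : E n) (hxbar : xbar ∈ X) (hproj : ‖x₀ - xbar‖ = Metric.infDist x₀ X) :
    ‖xt - x₀‖ ≤ ((L₂ / (2 * μ)) * Metric.infDist x₀ X + 2) * Metric.infDist x₀ X := by
  classical
  set D := Metric.infDist x₀ X with hDdef
  have hDnn : (0:ℝ) ≤ D := Metric.infDist_nonneg
  set d : E n := xbar - x₀ with hddef
  set s : E n := xt - xbar with hsdef
  have hdD : ‖d‖ = D := by rw [hddef, norm_sub_rev, hproj]
  -- derivative of f along a line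
  have hline : ∀ (a u : E n) (t : ℝ),
      HasDerivAt (fun r : ℝ => f (a + r • u)) ⟪f' (a + t • u), u⟫ t := by
    intro a u t
    have h1 : HasDerivAt (fun r : ℝ => a + r • u) u t := by
      simpa using ((hasDerivAt_id t).smul_const u).const_add a
    have h2 := (hgrad (a + t • u)).hasFDerivAt.comp_hasDerivAt t h1
    simpa [InnerProductSpace.toDual_apply_apply, Function.comp_def] using h2
  -- derivative of f' along a line
  have hlineg : ∀ (a u : E n) (t : ℝ),
      HasDerivAt (fun r : ℝ => f' (a + r • u)) (hess (a + t • u) u) t := by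
    intro a u t
    have h1 : HasDerivAt (fun r : ℝ => a + r • u) u t := by
      simpa using ((hasDerivAt_id t).smul_const u).const_add a
    simpa [Function.comp_def] using (hhess (a + t • u)).comp_hasDerivAt t h1
  -- gradient inequality for the convex function f
  have hgradineq : ∀ a b : E n, f a + ⟪f' a, b - a⟫ ≤ f b := by
    intro a b
    set ψ : ℝ → ℝ := fun r => f (a + r • (b - a)) with hψdef
    have hψconv : ConvexOn ℝ Set.univ ψ := by
      have h := hfconv.comp_affineMap (AffineMap.lineMap a b)
      rw [Set.preimage_univ] at h
      have hfun : ψ = f ∘ (AffineMap.lineMap a b) := by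
        funext t
        simp only [hψdef, Function.comp_apply, AffineMap.lineMap_apply_module]
        congr 1
        module
      rw [hfun]
      exact h
    have hder : HasDerivAt ψ ⟪f' a, b - a⟫ 0 := by
      simpa using hline a (b - a) 0
    have hslope : Filter.Tendsto (slope ψ 0) (𝓝[>] 0) (𝓝 ⟪f' a, b - a⟫) :=
      (hasDerivAt_iff_tendsto_slope.mp hder).mono_left
        (nhdsWithin_mono 0 fun x hx => ne_of_gt hx)
    have hψ1 : ψ 1 = f b := by simp [hψdef]
    have hψ0 : ψ 0 = f a := by simp [hψdef]
    have hb : ⟪f' a, b - a⟫ ≤ f b - f a := by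
      refine le_of_tendsto hslope ?_
      filter_upwards [Ioc_mem_nhdsGT_of_mem (Set.mem_Ico.mpr ⟨le_refl 0, zero_lt_one⟩)]
        with t ht
      have hsec := hψconv.secant_mono (Set.mem_univ 0) (Set.mem_univ t) (Set.mem_univ 1)
        (ne_of_gt ht.1) one_ne_zero ht.2
      rw [slope_def_field]
      calc (ψ t - ψ 0) / (t - 0) = (ψ t - ψ 0) / t := by rw [sub_zero]
        _ ≤ (ψ 1 - ψ 0) / (1 - 0) := by simpa using hsec
        _ = f b - f a := by rw [hψ1, hψ0]; norm_num
    linarith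
  -- monotonicity of the gradient
  have hmono : ∀ a b : E n, 0 ≤ ⟪f' b - f' a, b - a⟫ := by
    intro a b
    have h1 := hgradineq a b
    have h2 := hgradineq b a
    have e1 : ⟪f' b, a - b⟫ = -⟪f' b, b - a⟫ := by
      rw [← inner_neg_right]; congr 1; abel
    rw [e1] at h2
    rw [inner_sub_left]
    linarith
  -- positive semidefiniteness of the Hessian at x₀
  have hpsd : ∀ w : E n, 0 ≤ ⟪hess x₀ w, w⟫ := by
    intro w
    have hder : HasDerivAt (fun r : ℝ => f' (x₀ + r • w)) (hess x₀ w) 0 := by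
      simpa using hlineg x₀ w 0
    have hslope : Filter.Tendsto
        (fun t => ⟪slope (fun r : ℝ => f' (x₀ + r • w)) 0 t, w⟫)
        (𝓝[>] 0) (𝓝 ⟪hess x₀ w, w⟫) :=
      (((hasDerivAt_iff_tendsto_slope.mp hder).mono_left
        (nhdsWithin_mono 0 fun x hx => ne_of_gt hx)).inner tendsto_const_nhds)
    refine ge_of_tendsto hslope ?_
    filter_upwards [self_mem_nhdsWithin] with t ht
    have ht' : (0:ℝ) < t := ht
    have hm := hmono x₀ (x₀ + t • w)
    have e : (x₀ + t • w) - x₀ = t • w := by abel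
    rw [e, real_inner_smul_right] at hm
    have hm' : 0 ≤ ⟪f' (x₀ + t • w) - f' x₀, w⟫ :=
      nonneg_of_mul_nonneg_right (by linarith) ht'
    rw [slope_def_module, real_inner_smul_left]
    have e0 : f' (x₀ + (0:ℝ) • w) = f' x₀ := by norm_num
    rw [sub_zero, e0]
    exact mul_nonneg (inv_nonneg.mpr ht'.le) hm'
  -- second-order Taylor bound for the gradient
  have htaylor : ‖f' xbar - f' x₀ - hess x₀ d‖ ≤ L₂ / 2 * (‖d‖ * ‖d‖) := by
    set γ : ℝ → E n := fun r => f' (x₀ + r • d) - f' x₀ - r • hess x₀ d with hγdef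
    have hγder : ∀ t : ℝ, HasDerivAt γ (hess (x₀ + t • d) d - hess x₀ d) t := by
      intro t
      have h1 := hlineg x₀ d t
      have h2 : HasDerivAt (fun r : ℝ => r • hess x₀ d) (hess x₀ d) t := by
        simpa using (hasDerivAt_id t).smul_const (hess x₀ d)
      simpa [hγdef, Pi.sub_def] using (h1.sub_const (f' x₀)).sub h2
    have hB : ∀ t : ℝ, HasDerivAt (fun r : ℝ => L₂ * (‖d‖ * ‖d‖) / 2 * r ^ 2)
        (L₂ * (‖d‖ * ‖d‖) * t) t := by
      intro t
      have h1 : HasDerivAt (fun r : ℝ => r ^ 2) (2 * t) t := by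
        simpa using hasDerivAt_pow 2 t
      have := h1.const_mul (L₂ * (‖d‖ * ‖d‖) / 2)
      rw [show L₂ * (‖d‖ * ‖d‖) * t = L₂ * (‖d‖ * ‖d‖) / 2 * (2 * t) by ring]
      exact this
    have bound : ∀ t ∈ Set.Ico (0:ℝ) 1,
        ‖hess (x₀ + t • d) d - hess x₀ d‖ ≤ L₂ * (‖d‖ * ‖d‖) * t := by
      intro t ht
      have e1 : hess (x₀ + t • d) d - hess x₀ d = (hess (x₀ + t • d) - hess x₀) d := by
        simp [ContinuousLinearMap.sub_apply]
      rw [e1]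
      calc ‖(hess (x₀ + t • d) - hess x₀) d‖
          ≤ ‖hess (x₀ + t • d) - hess x₀‖ * ‖d‖ :=
            ContinuousLinearMap.le_opNorm _ _
        _ ≤ (L₂ * ‖(x₀ + t • d) - x₀‖) * ‖d‖ := by
            apply mul_le_mul_of_nonneg_right _ (norm_nonneg d)
            exact hlip2 _ _
        _ = L₂ * (‖d‖ * ‖d‖) * t := by
            have : (x₀ + t • d) - x₀ = t • d := by abel
            rw [this, norm_smul, Real.norm_eq_abs, abs_of_nonneg ht.1]
            ring
    have key := image_norm_le_of_norm_deriv_right_le_deriv_boundary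
      (f := γ) (f' := fun t => hess (x₀ + t • d) d - hess x₀ d) (a := 0) (b := 1)
      (fun t _ => (hγder t).continuousAt.continuousWithinAt)
      (fun t _ => (hγder t).hasDerivWithinAt)
      (by simp [hγdef] : ‖γ 0‖ ≤ L₂ * (‖d‖ * ‖d‖) / 2 * (0:ℝ) ^ 2)
      hB bound
    have h1 := key (Set.mem_Icc.mpr ⟨zero_le_one, le_refl 1⟩)
    have e2 : γ 1 = f' xbar - f' x₀ - hess x₀ d := by
      have hxd : x₀ + d = xbar := by rw [hddef]; abel
      simp [hγdef, one_smul, hxd]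
    rw [e2] at h1
    calc ‖f' xbar - f' x₀ - hess x₀ d‖ ≤ L₂ * (‖d‖ * ‖d‖) / 2 * (1:ℝ) ^ 2 := h1
      _ = L₂ / 2 * (‖d‖ * ‖d‖) := by ring
  -- symmetry of H
  have hHsym : ∀ a b : E n, ⟪H a, b⟫ = ⟪H b, a⟫ := by
    intro a b
    rw [hH]
    simp only [ContinuousLinearMap.add_apply, ContinuousLinearMap.smul_apply,
      ContinuousLinearMap.id_apply, inner_add_left, real_inner_smul_left]
    rw [hsa x₀ a b, real_inner_comm a (hess x₀ b), real_inner_comm a b]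
  -- optimality condition for xt
  set u : E n := xbar - xt with hudef
  set v : E n := xt - x₀ with hvdef
  have key1 : 0 ≤ ⟪f' x₀, u⟫ + ⟪H v, u⟫ + (g xbar - g xt) := by
    have hA : ∀ t : ℝ, t ∈ Set.Ioc (0:ℝ) 1 →
        0 ≤ (⟪f' x₀, u⟫ + ⟪H v, u⟫ + (g xbar - g xt)) + t * ((1/2) * ⟪H u, u⟫) := by
      intro t ht
      have hxtq := hxt (xt + t • u)
      rw [hq, hq] at hxtq
      have e2 : xt + t • u - x₀ = v + t • u := by rw [hvdef]; abel
      rw [e2, ← hvdef] at hxtq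
      have hconvg : g (xt + t • u) ≤ (1 - t) * g xt + t * g xbar := by
        have h := hgconv.2 (Set.mem_univ xt) (Set.mem_univ xbar)
          (by linarith [ht.2] : (0:ℝ) ≤ 1 - t) ht.1.le (by ring)
        have e : (1 - t) • xt + t • xbar = xt + t • u := by
          rw [hudef, smul_sub, sub_smul, one_smul]; abel
        rw [e] at h
        simpa using h
      have hexp : ⟪H (v + t • u), v + t • u⟫
          = ⟪H v, v⟫ + 2 * t * ⟪H v, u⟫ + t ^ 2 * ⟪H u, u⟫ := by
        have h1 : H (v + t • u) = H v + t • H u := by rw [map_add, map_smul]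
        rw [h1]
        simp only [inner_add_left, inner_add_right, real_inner_smul_left,
          real_inner_smul_right, hHsym u v]
        ring
      have hexp2 : ⟪f' x₀, v + t • u⟫ = ⟪f' x₀, v⟫ + t * ⟪f' x₀, u⟫ := by
        rw [inner_add_right, real_inner_smul_right]
      rw [hexp, hexp2] at hxtq
      have h3 : t * 0 ≤ t * ((⟪f' x₀, u⟫ + ⟪H v, u⟫ + (g xbar - g xt))
          + t * ((1/2) * ⟪H u, u⟫)) := by nlinarith [hxtq, hconvg]
      exact le_of_mul_le_mul_left h3 ht.1
    have hlim : Filter.Tendsto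
        (fun t : ℝ => (⟪f' x₀, u⟫ + ⟪H v, u⟫ + (g xbar - g xt)) + t * ((1/2) * ⟪H u, u⟫))
        (𝓝[>] 0) (𝓝 ((⟪f' x₀, u⟫ + ⟪H v, u⟫ + (g xbar - g xt)) + 0 * ((1/2) * ⟪H u, u⟫))) := by
      exact ((tendsto_id.mul_const _).const_add _).mono_left nhdsWithin_le_nhds
    rw [zero_mul, add_zero] at hlim
    refine ge_of_tendsto hlim ?_
    filter_upwards [Ioc_mem_nhdsGT_of_mem (Set.mem_Ico.mpr ⟨le_refl 0, zero_lt_one⟩)]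
      with t ht using hA t ht
  -- optimality condition for xbar
  have hFmin : ∀ y, F xbar ≤ F y := by rw [hX] at hxbar; exact hxbar
  have key2 : 0 ≤ ⟪f' xbar, s⟫ + (g xt - g xbar) := by
    have hder : HasDerivAt (fun r : ℝ => f (xbar + r • s)) ⟪f' xbar, s⟫ 0 := by
      simpa using hline xbar s 0
    have hslope : Filter.Tendsto (slope (fun r : ℝ => f (xbar + r • s)) 0)
        (𝓝[>] 0) (𝓝 ⟪f' xbar, s⟫) :=
      (hasDerivAt_iff_tendsto_slope.mp hder).mono_left
        (nhdsWithin_mono 0 fun x hx => ne_of_gt hx)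
    have hkey : g xbar - g xt ≤ ⟪f' xbar, s⟫ := by
      refine ge_of_tendsto hslope ?_
      filter_upwards [Ioc_mem_nhdsGT_of_mem (Set.mem_Ico.mpr ⟨le_refl 0, zero_lt_one⟩)]
        with t ht
      have h1 := hFmin (xbar + t • s)
      rw [hF, hF] at h1
      have hconvg : g (xbar + t • s) ≤ (1 - t) * g xbar + t * g xt := by
        have h := hgconv.2 (Set.mem_univ xbar) (Set.mem_univ xt)
          (by linarith [ht.2] : (0:ℝ) ≤ 1 - t) ht.1.le (by ring)
        have e : (1 - t) • xbar + t • xt = xbar + t • s := by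
          rw [hsdef, smul_sub, sub_smul, one_smul]; abel
        rw [e] at h
        simpa using h
      rw [slope_def_field, sub_zero]
      have e0 : f (xbar + (0:ℝ) • s) = f xbar := by norm_num
      rw [e0, le_div_iff₀ ht.1]
      nlinarith [h1, hconvg]

    linarith
  -- combine
  have hus : u = -s := by rw [hudef, hsdef]; abel
  have hv : v = s + d := by rw [hvdef, hsdef, hddef]; abel
  have hHv : ⟪H v, s⟫ = ⟪hess x₀ s, s⟫ + ⟪hess x₀ d, s⟫ + μ * ⟪s, s⟫ + μ * ⟪d, s⟫ := by
    rw [hv, hH]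
    simp only [ContinuousLinearMap.add_apply, ContinuousLinearMap.smul_apply,
      ContinuousLinearMap.id_apply, map_add, inner_add_left, real_inner_smul_left]
    ring
  have key1' : 0 ≤ -⟪f' x₀, s⟫ - ⟪H v, s⟫ + (g xbar - g xt) := by
    have e1 : ⟪f' x₀, u⟫ = -⟪f' x₀, s⟫ := by rw [hus, inner_neg_right]
    have e2 : ⟪H v, u⟫ = -⟪H v, s⟫ := by rw [hus, inner_neg_right]
    rw [e1, e2] at key1
    linarith
  have hsum : μ * (‖s‖ * ‖s‖) ≤ ⟪f' xbar - f' x₀ - hess x₀ d - μ • d, s⟫ := by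
    have hinner : ⟪f' xbar - f' x₀ - hess x₀ d - μ • d, s⟫
        = ⟪f' xbar, s⟫ - ⟪f' x₀, s⟫ - ⟪hess x₀ d, s⟫ - μ * ⟪d, s⟫ := by
      simp only [inner_sub_left, real_inner_smul_left]
    have hss : ⟪s, s⟫ = ‖s‖ * ‖s‖ := real_inner_self_eq_norm_mul_norm s
    have hp := hpsd s
    rw [hinner]
    rw [hHv, hss] at key1'
    linarith
  have hw : ‖f' xbar - f' x₀ - hess x₀ d - μ • d‖ ≤ L₂ / 2 * (D * D) + μ * D := by
    calc ‖f' xbar - f' x₀ - hess x₀ d - μ • d‖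
        ≤ ‖f' xbar - f' x₀ - hess x₀ d‖ + ‖μ • d‖ := norm_sub_le _ _
      _ ≤ L₂ / 2 * (‖d‖ * ‖d‖) + ‖μ • d‖ := by linarith [htaylor]
      _ = L₂ / 2 * (D * D) + μ * D := by
          rw [norm_smul, Real.norm_eq_abs, abs_of_pos hμ, hdD]
  have hfin : μ * (‖s‖ * ‖s‖) ≤ (L₂ / 2 * (D * D) + μ * D) * ‖s‖ := by
    calc μ * (‖s‖ * ‖s‖) ≤ ⟪f' xbar - f' x₀ - hess x₀ d - μ • d, s⟫ := hsum
      _ ≤ ‖f' xbar - f' x₀ - hess x₀ d - μ • d‖ * ‖s‖ := real_inner_le_norm _ _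
      _ ≤ (L₂ / 2 * (D * D) + μ * D) * ‖s‖ :=
          mul_le_mul_of_nonneg_right hw (norm_nonneg s)
  have hsle : ‖s‖ ≤ L₂ / (2 * μ) * (D * D) + D := by
    rcases eq_or_lt_of_le (norm_nonneg s) with h0 | h0
    · rw [← h0]; positivity
    · have h1 : μ * ‖s‖ ≤ L₂ / 2 * (D * D) + μ * D := by
        have h2 : (μ * ‖s‖) * ‖s‖ ≤ (L₂ / 2 * (D * D) + μ * D) * ‖s‖ := by
          calc (μ * ‖s‖) * ‖s‖ = μ * (‖s‖ * ‖s‖) := by ring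
            _ ≤ (L₂ / 2 * (D * D) + μ * D) * ‖s‖ := hfin
        exact le_of_mul_le_mul_right h2 h0
      have e : L₂ / (2 * μ) * (D * D) + D = (L₂ / 2 * (D * D) + μ * D) / μ := by
        field_simp
      rw [e, le_div_iff₀ hμ]
      linarith
  have hxtd : ‖xt - x₀‖ ≤ ‖s‖ + D := by
    have e : xt - x₀ = s + d := by rw [hsdef, hddef]; abel
    rw [e, ← hdD]
    exact norm_add_le _ _
  calc ‖xt - x₀‖ ≤ ‖s‖ + D := hxtd
    _ ≤ (L₂ / (2 * μ) * (D * D) + D) + D := by linarith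
    _ = (L₂ / (2 * μ) * D + 2) * D := by ring
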